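/- arXiv:0710.1985 — 4 statements merged into one kernel-verified Lean document; each statement's English description precedes it below -/
import Mathlib

section
/- Let b > 2 be a real number and let (s_n)_{n≥0} be a sequence of real numbers with 0 < s_0 < b−2 and s_{n+1} = s_n/(b−1−s_n) for all n ≥ 0. Then for every n ≥ 0 one has 0 < s_n < b−2 and s_n/(b−2−s_n) = (b−1)^{−n}·s_0/(b−2−s_0); consequently (b−1)^n·s_n converges, as n → ∞, to s_0(b−2)/(b−2−s_0) > 0. -/
open Filter

/-- Recursion for the variances of the iterates of a Mandelbrot
cascade operator: if `0 < s 0 < b - 2` and `s (n+1) = s n / (b - 1 - s n)`, then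
`0 < s n < b - 2`, `s n / (b - 2 - s n) = (b-1)⁻ⁿ · s 0 / (b - 2 - s 0)`, and
`(b-1)^n · s n` converges to `s 0 (b-2)/(b - 2 - s 0) > 0`. -/
theorem stmt_1 (b : ℝ) (hb : 2 < b) (s : ℕ → ℝ)
    (h0 : 0 < s 0) (h0' : s 0 < b - 2)
    (hrec : ∀ n : ℕ, s (n + 1) = s n / (b - 1 - s n)) :
    (∀ n : ℕ, 0 < s n ∧ s n < b - 2) ∧
    (∀ n : ℕ, s n / (b - 2 - s n) = (b - 1) ^ (-(n : ℤ)) * (s 0 / (b - 2 - s 0))) ∧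
    Tendsto (fun n : ℕ => (b - 1) ^ n * s n) atTop
      (nhds (s 0 * (b - 2) / (b - 2 - s 0))) ∧
    0 < s 0 * (b - 2) / (b - 2 - s 0) := by
  have hb1 : (1 : ℝ) < b - 1 := by linarith
  have hbne : (b - 1 : ℝ) ≠ 0 := by linarith
  -- bounds
  have hbd : ∀ n : ℕ, 0 < s n ∧ s n < b - 2 := by
    intro n
    induction n with
    | zero => exact ⟨h0, h0'⟩
    | succ k ih =>
      obtain ⟨hp, hl⟩ := ih
      have hd : 0 < b - 1 - s k := by linarith
      constructor
      · rw [hrec k]; exact div_pos hp hd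
      · rw [hrec k, div_lt_iff₀ hd]
        nlinarith
  -- multiplied identity
  have key : ∀ n : ℕ, s n * (b - 2 - s 0) * (b - 1) ^ n = s 0 * (b - 2 - s n) := by
    intro n
    induction n with
    | zero => ring
    | succ k ih =>
      obtain ⟨hp, hl⟩ := hbd k
      have hd : (b - 1 - s k) ≠ 0 := by linarith
      rw [hrec k]
      field_simp
      linear_combination (b - 1) * ih
  have hC0 : (b - 2 - s 0) ≠ 0 := by linarith
  refine ⟨hbd, ?_, ?_, ?_⟩
  · intro n
    obtain ⟨hp, hl⟩ := hbd n
    have hdn : (b - 2 - s n) ≠ 0 := by linarith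
    have hpow : ((b - 1 : ℝ)) ^ (-(n : ℤ)) = ((b - 1) ^ n)⁻¹ := by
      rw [zpow_neg, zpow_natCast]
    rw [hpow]
    have hpne : ((b - 1 : ℝ)) ^ n ≠ 0 := pow_ne_zero _ hbne
    field_simp
    linear_combination key n
  · -- s n → 0 by squeeze
    have hs0 : Tendsto s atTop (nhds 0) := by
      have hg : Tendsto (fun n : ℕ => s 0 * (b - 2) / (b - 2 - s 0) * ((b - 1)⁻¹) ^ n)
          atTop (nhds 0) := by
        have : Tendsto (fun n : ℕ => ((b - 1)⁻¹) ^ n) atTop (nhds 0) := by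
          apply tendsto_pow_atTop_nhds_zero_of_lt_one
          · positivity
          · rw [inv_lt_one_iff₀]; right; linarith
        simpa using this.const_mul (s 0 * (b - 2) / (b - 2 - s 0))
      refine squeeze_zero (fun n => (hbd n).1.le) (fun n => ?_) hg
      obtain ⟨hp, hl⟩ := hbd n
      have hpowpos : (0 : ℝ) < (b - 1) ^ n := by positivity
      have h2 : s n * (b - 2 - s 0) * (b - 1) ^ n ≤ s 0 * (b - 2) := by
        rw [key n]; nlinarith
      rw [inv_pow, ← div_eq_mul_inv, le_div_iff₀ hpowpos,
        le_div_iff₀ (show (0:ℝ) < b - 2 - s 0 by linarith)]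
      nlinarith [h2]
    have heq : ∀ n : ℕ, (b - 1) ^ n * s n = s 0 / (b - 2 - s 0) * ((b - 2) - s n) := by
      intro n
      field_simp
      linear_combination key n
    have : Tendsto (fun n : ℕ => s 0 / (b - 2 - s 0) * ((b - 2) - s n)) atTop
        (nhds (s 0 / (b - 2 - s 0) * ((b - 2) - 0))) :=
      (tendsto_const_nhds.sub hs0).const_mul _
    have hval : s 0 * (b - 2) / (b - 2 - s 0) = s 0 / (b - 2 - s 0) * ((b - 2) - 0) := by
      ring
    rw [hval]
    exact this.congr fun n => (heq n).symm
  · exact div_pos (mul_pos h0 (by linarith)) (by linarith)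
end

section
/- Let b ≥ 2 be an integer. For every continuous function f : [0,1] → ℝ and every δ ∈ (0,1), the modulus of continuity of f satisfies ω(f,δ) ≤ 2(b−1) · ∑_{j ≥ log(1/δ)/log b} sup_{w ∈ A^j} |Δ(f, I_w)|, where the sum is over all integers j ≥ −log δ / log b. -/
open scoped ENNReal

/-- Left endpoint of the `b`-adic interval `I_w` indexed by the word `w ∈ A^j`
(the `k`-th digit of `w`, `0`-indexed, has weight `b^{-(k+1)}`). -/
noncomputable def badicLeft (b j : ℕ) (w : Fin j → Fin b) : ℝ :=
  ∑ k : Fin j, (w k : ℝ) * (b : ℝ) ^ (-((k : ℕ) + 1) : ℤ)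

/-- Increment `Δ(f, I_w) = f(β) - f(α)` of `f` over the `b`-adic interval
`I_w = [α, β]`, `β = α + b^{-j}`. -/
noncomputable def badicIncr (b j : ℕ) (f : ℝ → ℝ) (w : Fin j → Fin b) : ℝ :=
  f (badicLeft b j w + (b : ℝ) ^ (-(j : ℤ))) - f (badicLeft b j w)

/-- Modulus of continuity of `f` on `[0,1]`:
`ω(f,δ) = sup { |f t - f s| : t, s ∈ [0,1], |t - s| ≤ δ }`. -/
noncomputable def modCont (f : ℝ → ℝ) (δ : ℝ) : ℝ :=
  ⨆ p : {q : ℝ × ℝ // q.1 ∈ Set.Icc (0 : ℝ) 1 ∧ q.2 ∈ Set.Icc (0 : ℝ) 1 ∧ |q.1 - q.2| ≤ δ},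
    |f (p : ℝ × ℝ).1 - f (p : ℝ × ℝ).2|

noncomputable def supIncr (b j : ℕ) (f : ℝ → ℝ) : ℝ :=
  ⨆ w : Fin j → Fin b, |badicIncr b j f w|

lemma supIncr_nonneg (b j : ℕ) (hb : 2 ≤ b) (f : ℝ → ℝ) : 0 ≤ supIncr b j f := by
  haveI : Nonempty (Fin b) := ⟨⟨0, by omega⟩⟩
  have h := le_ciSup (f := fun w : Fin j → Fin b => |badicIncr b j f w|)
    (Set.Finite.bddAbove (Set.finite_range _)) (Classical.arbitrary _)
  exact le_trans (abs_nonneg _) h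

lemma abs_incr_le_supIncr (b j : ℕ) (f : ℝ → ℝ) (w : Fin j → Fin b) :
    |badicIncr b j f w| ≤ supIncr b j f :=
  le_ciSup (f := fun w : Fin j → Fin b => |badicIncr b j f w|)
    (Set.Finite.bddAbove (Set.finite_range _)) w

lemma exists_word (b : ℕ) (hb : 2 ≤ b) :
    ∀ j m, m < b ^ j → ∃ w : Fin j → Fin b,
      (∑ k : Fin j, (w k : ℕ) * b ^ (j - 1 - (k : ℕ))) = m := by
  intro j
  induction j with
  | zero =>
    intro m hm
    have : m = 0 := by simpa using hm
    subst this
    exact ⟨fun k => k.elim0, by simp⟩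
  | succ j ih =>
    intro m hm
    have hbpos : 0 < b ^ j := Nat.pow_pos (by omega)
    have hq : m / b ^ j < b := by
      rw [Nat.div_lt_iff_lt_mul hbpos]
      exact lt_of_lt_of_eq hm (by ring)
    obtain ⟨w', hw'⟩ := ih (m % b ^ j) (Nat.mod_lt _ hbpos)
    refine ⟨Fin.cons ⟨m / b ^ j, hq⟩ w', ?_⟩
    rw [Fin.sum_univ_succ]
    simp only [Fin.cons_zero, Fin.cons_succ, Fin.val_succ, Fin.val_zero]
    have e1 : j + 1 - 1 - 0 = j := by omega
    rw [e1]
    have e2 : ∑ i : Fin j, ((w' i : ℕ)) * b ^ (j + 1 - 1 - ((i : ℕ) + 1))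
        = ∑ i : Fin j, ((w' i : ℕ)) * b ^ (j - 1 - (i : ℕ)) := by
      refine Finset.sum_congr rfl fun i _ => ?_
      congr 2
      omega
    rw [e2, hw']
    exact Nat.div_add_mod' m (b ^ j)

lemma badicLeft_eq (b j : ℕ) (hb : 2 ≤ b) (w : Fin j → Fin b) :
    badicLeft b j w
      = ((∑ k : Fin j, (w k : ℕ) * b ^ (j - 1 - (k : ℕ)) : ℕ) : ℝ) / (b : ℝ) ^ j := by
  have hB : (b : ℝ) ≠ 0 := by positivity
  rw [badicLeft]
  push_cast
  rw [Finset.sum_div]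
  refine Finset.sum_congr rfl fun k _ => ?_
  have hk : (k : ℕ) < j := k.2
  rw [mul_div_assoc]
  congr 1
  have e1 : ((b : ℝ)) ^ ((j - 1 - (k : ℕ)) : ℕ) = (b : ℝ) ^ (((j : ℤ) - 1 - (k : ℕ))) := by
    rw [← zpow_natCast]
    congr 1
    omega
  rw [e1, show ((b : ℝ)) ^ (j : ℕ) = (b : ℝ) ^ (j : ℤ) from (zpow_natCast _ _).symm,
    ← zpow_sub₀ hB]
  congr 1
  omega

lemma grid_le (b j : ℕ) (hb : 2 ≤ b) (f : ℝ → ℝ) (m : ℕ) (hm : m + 1 ≤ b ^ j) :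
    |f (((m : ℝ) + 1) / (b : ℝ) ^ j) - f ((m : ℝ) / (b : ℝ) ^ j)| ≤ supIncr b j f := by
  obtain ⟨w, hw⟩ := exists_word b hb j m (by omega)
  have hB : (0 : ℝ) < (b : ℝ) ^ j := by positivity
  have hleft : badicLeft b j w = (m : ℝ) / (b : ℝ) ^ j := by
    rw [badicLeft_eq b j hb w, hw]
  have hright : badicLeft b j w + (b : ℝ) ^ (-(j : ℤ)) = ((m : ℝ) + 1) / (b : ℝ) ^ j := by
    rw [hleft, zpow_neg, zpow_natCast]
    field_simp
  have := abs_incr_le_supIncr b j f w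
  rwa [badicIncr, hright, hleft] at this

lemma tele_le (b j : ℕ) (hb : 2 ≤ b) (f : ℝ → ℝ) (m : ℕ) :
    ∀ d : ℕ, m + d ≤ b ^ j →
      |f (((m + d : ℕ) : ℝ) / (b : ℝ) ^ j) - f ((m : ℝ) / (b : ℝ) ^ j)|
        ≤ d * supIncr b j f := by
  intro d
  induction d with
  | zero => intro _; simp
  | succ d ih =>
    intro hd
    have h1 := grid_le b j hb f (m + d) (by omega)
    have h2 := ih (by omega)
    have tri : |f (((m + (d+1) : ℕ) : ℝ) / (b : ℝ) ^ j) - f ((m : ℝ) / (b : ℝ) ^ j)|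
        ≤ |f ((((m + d : ℕ) : ℝ) + 1) / (b : ℝ) ^ j) - f (((m + d : ℕ) : ℝ) / (b : ℝ) ^ j)|
          + |f (((m + d : ℕ) : ℝ) / (b : ℝ) ^ j) - f ((m : ℝ) / (b : ℝ) ^ j)| := by
      have e : (((m + (d+1) : ℕ) : ℝ)) = (((m + d : ℕ) : ℝ) + 1) := by push_cast; ring
      rw [e]
      exact abs_sub_le _ _ _
    calc |f (((m + (d+1) : ℕ) : ℝ) / (b : ℝ) ^ j) - f ((m : ℝ) / (b : ℝ) ^ j)|
        ≤ _ + _ := tri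
      _ ≤ supIncr b j f + d * supIncr b j f := add_le_add h1 h2
      _ = (d + 1 : ℕ) * supIncr b j f := by push_cast; ring

noncomputable def adicN (b n : ℕ) (x : ℝ) : ℕ := (⌊x * (b : ℝ) ^ n⌋).toNat

noncomputable def adicApprox (b n : ℕ) (x : ℝ) : ℝ := ((adicN b n x : ℕ) : ℝ) / (b : ℝ) ^ n

lemma adicN_cast (b n : ℕ) {x : ℝ} (hx : 0 ≤ x) :
    ((adicN b n x : ℕ) : ℝ) = ((⌊x * (b : ℝ) ^ n⌋ : ℤ) : ℝ) := by
  have h0 : (0 : ℝ) ≤ x * (b : ℝ) ^ n := by positivity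
  have h := Int.toNat_of_nonneg (Int.floor_nonneg.2 h0)
  rw [adicN, ← h]
  norm_cast

lemma adicN_le (b n : ℕ) {x : ℝ} (hx : 0 ≤ x) : ((adicN b n x : ℕ) : ℝ) ≤ x * (b : ℝ) ^ n := by
  rw [adicN_cast b n hx]
  exact Int.floor_le _

lemma lt_adicN_add_one (b n : ℕ) {x : ℝ} (hx : 0 ≤ x) :
    x * (b : ℝ) ^ n < (adicN b n x : ℝ) + 1 := by
  rw [adicN_cast b n hx]
  exact Int.lt_floor_add_one _

lemma adicN_le_pow (b n : ℕ) (hb : 2 ≤ b) {x : ℝ} (hx : x ∈ Set.Icc (0 : ℝ) 1) :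
    adicN b n x ≤ b ^ n := by
  have hB : (0 : ℝ) < (b : ℝ) ^ n := by positivity
  have h1 : ((adicN b n x : ℕ) : ℝ) ≤ (b : ℝ) ^ n := by
    calc ((adicN b n x : ℕ) : ℝ) ≤ x * (b : ℝ) ^ n := adicN_le b n hx.1
    _ ≤ 1 * (b : ℝ) ^ n := by nlinarith [hx.2]
    _ = (b : ℝ) ^ n := one_mul _
  have h2 : ((adicN b n x : ℕ) : ℝ) ≤ ((b ^ n : ℕ) : ℝ) := by push_cast; exact h1
  exact_mod_cast h2

lemma adicApprox_mem (b n : ℕ) (hb : 2 ≤ b) {x : ℝ} (hx : x ∈ Set.Icc (0 : ℝ) 1) :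
    adicApprox b n x ∈ Set.Icc (0 : ℝ) 1 := by
  have hB : (0 : ℝ) < (b : ℝ) ^ n := by positivity
  constructor
  · rw [adicApprox]; positivity
  · rw [adicApprox, div_le_one hB]
    have h2 : ((adicN b n x : ℕ) : ℝ) ≤ ((b ^ n : ℕ) : ℝ) := by
      exact_mod_cast adicN_le_pow b n hb hx
    calc ((adicN b n x : ℕ) : ℝ) ≤ ((b ^ n : ℕ) : ℝ) := h2
      _ = (b : ℝ) ^ n := by push_cast; ring

lemma adicApprox_dist (b n : ℕ) (hb : 2 ≤ b) {x : ℝ} (hx : 0 ≤ x) :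
    |adicApprox b n x - x| ≤ ((b : ℝ) ^ n)⁻¹ := by
  have hB : (0 : ℝ) < (b : ℝ) ^ n := by positivity
  have h1 := adicN_le b n hx
  have h2 := lt_adicN_add_one b n hx
  have e : adicApprox b n x - x = (((adicN b n x : ℕ) : ℝ) - x * (b : ℝ) ^ n) / (b : ℝ) ^ n := by
    rw [adicApprox]
    field_simp
  rw [e, abs_div, abs_of_pos hB, div_le_iff₀ hB, inv_mul_cancel₀ hB.ne']
  rw [abs_le]
  constructor <;> nlinarith

lemma step_le (b n : ℕ) (hb : 2 ≤ b) (f : ℝ → ℝ) {x : ℝ} (hx : x ∈ Set.Icc (0 : ℝ) 1) :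
    |f (adicApprox b (n + 1) x) - f (adicApprox b n x)|
      ≤ ((b : ℝ) - 1) * supIncr b (n + 1) f := by
  have hb0 : (0 : ℝ) < (b : ℝ) := by positivity
  have hB : (0 : ℝ) < (b : ℝ) ^ n := by positivity
  set M := adicN b n x with hM
  set M' := adicN b (n + 1) x with hM'
  have h1 := adicN_le b n hx.1
  have h2 := lt_adicN_add_one b n hx.1
  have h1' := adicN_le b (n + 1) hx.1
  have h2' := lt_adicN_add_one b (n + 1) hx.1
  rw [pow_succ] at h1' h2'
  have key1 : b * M ≤ M' := by
    have hr : ((b * M : ℕ) : ℝ) < ((M' + 1 : ℕ) : ℝ) := by push_cast; nlinarith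
    have := Nat.cast_lt (α := ℝ) |>.1 hr
    omega
  have key2 : M' ≤ b * M + (b - 1) := by
    have hr : ((M' : ℕ) : ℝ) < ((b * M + b : ℕ) : ℝ) := by push_cast; nlinarith
    have := Nat.cast_lt (α := ℝ) |>.1 hr
    omega
  have key3 : M' ≤ b ^ (n + 1) := adicN_le_pow b (n + 1) hb hx
  set d := M' - b * M with hd
  have hdb : d ≤ b - 1 := by omega
  have hsum : b * M + d = M' := by omega
  have hAeq : adicApprox b n x = ((b * M : ℕ) : ℝ) / (b : ℝ) ^ (n + 1) := by
    rw [adicApprox, ← hM]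
    push_cast
    rw [pow_succ]
    field_simp
  have hA'eq : adicApprox b (n + 1) x = ((b * M + d : ℕ) : ℝ) / (b : ℝ) ^ (n + 1) := by
    rw [adicApprox, ← hM', hsum]
  have htele := tele_le b (n + 1) hb f (b * M) d (by omega)
  rw [← hAeq, ← hA'eq] at htele
  have hS := supIncr_nonneg b (n + 1) hb f
  have hdR : (d : ℝ) ≤ (b : ℝ) - 1 := by
    have h' := (Nat.cast_le (α := ℝ)).2 hdb
    rwa [show ((b - 1 : ℕ) : ℝ) = (b : ℝ) - 1 by
      rw [Nat.cast_sub (by omega : 1 ≤ b)]; simp] at h'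
  calc |f (adicApprox b (n + 1) x) - f (adicApprox b n x)| ≤ (d : ℝ) * supIncr b (n + 1) f :=
        htele
    _ ≤ ((b : ℝ) - 1) * supIncr b (n + 1) f := by nlinarith

lemma tail_sum (b : ℕ) (hb : 2 ≤ b) (f : ℝ → ℝ) {x : ℝ} (hx : x ∈ Set.Icc (0 : ℝ) 1)
    (n₀ : ℕ) : ∀ N, n₀ ≤ N →
    |f (adicApprox b N x) - f (adicApprox b n₀ x)|
      ≤ ∑ n ∈ Finset.Ico n₀ N, ((b : ℝ) - 1) * supIncr b (n + 1) f := by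
  intro N hN
  induction N, hN using Nat.le_induction with
  | base => simp
  | succ N hN ih =>
    have h1 := step_le b N hb f hx
    calc |f (adicApprox b (N + 1) x) - f (adicApprox b n₀ x)|
        ≤ |f (adicApprox b (N + 1) x) - f (adicApprox b N x)|
          + |f (adicApprox b N x) - f (adicApprox b n₀ x)| := abs_sub_le _ _ _
      _ ≤ ((b : ℝ) - 1) * supIncr b (N + 1) f
          + ∑ n ∈ Finset.Ico n₀ N, ((b : ℝ) - 1) * supIncr b (n + 1) f := add_le_add h1 ih
      _ = ∑ n ∈ Finset.Ico n₀ (N + 1), ((b : ℝ) - 1) * supIncr b (n + 1) f := by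
          rw [Finset.sum_Ico_succ_top hN]
          ring

lemma tendsto_f_adic (b : ℕ) (hb : 2 ≤ b) (f : ℝ → ℝ)
    (hf : ContinuousOn f (Set.Icc (0 : ℝ) 1)) {x : ℝ} (hx : x ∈ Set.Icc (0 : ℝ) 1) :
    Filter.Tendsto (fun N => f (adicApprox b N x)) Filter.atTop (nhds (f x)) := by
  have hb1 : (1 : ℝ) < (b : ℝ) := by exact_mod_cast by omega
  have h1 : Filter.Tendsto (fun N => adicApprox b N x) Filter.atTop (nhds x) := by
    have hd : ∀ N, ‖adicApprox b N x - x‖ ≤ ((b : ℝ)⁻¹) ^ N := by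
      intro N
      rw [Real.norm_eq_abs, inv_pow]
      exact adicApprox_dist b N hb hx.1
    have h0 : Filter.Tendsto (fun N => ((b : ℝ)⁻¹) ^ N) Filter.atTop (nhds 0) :=
      tendsto_pow_atTop_nhds_zero_of_lt_one (by positivity)
        (by rw [inv_lt_one_iff₀]; right; exact hb1)
    have hsq := squeeze_zero_norm hd h0
    have := hsq.add_const x
    simpa using this
  have h2 : Filter.Tendsto (fun N => adicApprox b N x) Filter.atTop
      (nhdsWithin x (Set.Icc (0 : ℝ) 1)) :=
    tendsto_nhdsWithin_of_tendsto_nhds_of_eventually_within _ h1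
      (Filter.Eventually.of_forall fun N => adicApprox_mem b N hb hx)
  exact ((hf x hx).tendsto).comp h2

lemma tail_ennreal (b : ℕ) (hb : 2 ≤ b) (f : ℝ → ℝ)
    (hf : ContinuousOn f (Set.Icc (0 : ℝ) 1)) {x : ℝ} (hx : x ∈ Set.Icc (0 : ℝ) 1) (n₀ : ℕ) :
    ENNReal.ofReal |f x - f (adicApprox b n₀ x)| ≤
      ENNReal.ofReal ((b : ℝ) - 1) *
        ∑' j : ℕ, (if n₀ < j then ENNReal.ofReal (supIncr b j f) else 0) := by
  have hb1 : (0 : ℝ) ≤ (b : ℝ) - 1 := by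
    have : (1 : ℝ) ≤ (b : ℝ) := by exact_mod_cast by omega
    linarith
  set U := ∑' j : ℕ, (if n₀ < j then ENNReal.ofReal (supIncr b j f) else 0) with hU
  have hlim : Filter.Tendsto
      (fun N => ENNReal.ofReal |f (adicApprox b N x) - f (adicApprox b n₀ x)|)
      Filter.atTop (nhds (ENNReal.ofReal |f x - f (adicApprox b n₀ x)|)) := by
    have h0 := tendsto_f_adic b hb f hf hx
    exact (ENNReal.continuous_ofReal.tendsto _).comp
      ((h0.sub_const (f (adicApprox b n₀ x))).abs)
  refine le_of_tendsto hlim ?_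
  filter_upwards [Filter.eventually_ge_atTop n₀] with N hN
  have hreal := tail_sum b hb f hx n₀ N hN
  have hnn : ∀ n ∈ Finset.Ico n₀ N, 0 ≤ ((b : ℝ) - 1) * supIncr b (n + 1) f :=
    fun n _ => mul_nonneg hb1 (supIncr_nonneg b (n + 1) hb f)
  calc ENNReal.ofReal |f (adicApprox b N x) - f (adicApprox b n₀ x)|
      ≤ ENNReal.ofReal (∑ n ∈ Finset.Ico n₀ N, ((b : ℝ) - 1) * supIncr b (n + 1) f) :=
        ENNReal.ofReal_le_ofReal hreal
    _ = ∑ n ∈ Finset.Ico n₀ N, ENNReal.ofReal (((b : ℝ) - 1) * supIncr b (n + 1) f) :=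
        ENNReal.ofReal_sum_of_nonneg hnn
    _ = ∑ n ∈ Finset.Ico n₀ N,
          ENNReal.ofReal ((b : ℝ) - 1) * ENNReal.ofReal (supIncr b (n + 1) f) :=
        Finset.sum_congr rfl fun n _ => ENNReal.ofReal_mul hb1
    _ = ENNReal.ofReal ((b : ℝ) - 1) *
          ∑ n ∈ Finset.Ico n₀ N, ENNReal.ofReal (supIncr b (n + 1) f) := by
        rw [Finset.mul_sum]
    _ ≤ ENNReal.ofReal ((b : ℝ) - 1) * U := by
        refine mul_le_mul_right ?_ _
        have e1 : ∑ n ∈ Finset.Ico n₀ N, ENNReal.ofReal (supIncr b (n + 1) f)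
            = ∑ n ∈ Finset.Ico n₀ N,
                (if n₀ < n + 1 then ENNReal.ofReal (supIncr b (n + 1) f) else 0) := by
          refine Finset.sum_congr rfl fun n hn => ?_
          rw [if_pos (by simp at hn; omega)]
        rw [e1]
        calc ∑ n ∈ Finset.Ico n₀ N,
              (if n₀ < n + 1 then ENNReal.ofReal (supIncr b (n + 1) f) else 0)
            ≤ ∑' n : ℕ, (if n₀ < n + 1 then ENNReal.ofReal (supIncr b (n + 1) f) else 0) :=
              ENNReal.sum_le_tsum _
          _ ≤ U :=
              ENNReal.tsum_comp_le_tsum_of_injective Nat.succ_injective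
                (fun j => if n₀ < j then ENNReal.ofReal (supIncr b j f) else 0)

lemma mid_one (b n : ℕ) (hb : 2 ≤ b) (f : ℝ → ℝ) (δ : ℝ)
    (hδB : δ * (b : ℝ) ^ n ≤ (b : ℝ)) {u v : ℝ}
    (hu : u ∈ Set.Icc (0 : ℝ) 1) (hv : v ∈ Set.Icc (0 : ℝ) 1)
    (huv : u - v ≤ δ) (hM : adicN b n v ≤ adicN b n u) :
    |f (adicApprox b n u) - f (adicApprox b n v)| ≤ (b : ℝ) * supIncr b n f := by
  have hB : (0 : ℝ) < (b : ℝ) ^ n := by positivity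
  set Mu := adicN b n u with hMu
  set Mv := adicN b n v with hMv
  have h1 := adicN_le b n hu.1
  have h2 := lt_adicN_add_one b n hv.1
  have key : Mu ≤ Mv + b := by
    have hr : ((Mu : ℕ) : ℝ) < ((Mv + b + 1 : ℕ) : ℝ) := by
      push_cast
      nlinarith
    have := Nat.cast_lt (α := ℝ) |>.1 hr
    omega
  set d := Mu - Mv with hd
  have hsum : Mv + d = Mu := by omega
  have hub : Mv + d ≤ b ^ n := hsum ▸ adicN_le_pow b n hb hu
  have htele := tele_le b n hb f Mv d hub
  rw [hsum] at htele
  have hS := supIncr_nonneg b n hb f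
  have hdR : (d : ℝ) ≤ (b : ℝ) := by exact_mod_cast by omega
  calc |f (adicApprox b n u) - f (adicApprox b n v)|
      = |f (((Mu : ℕ) : ℝ) / (b : ℝ) ^ n) - f (((Mv : ℕ) : ℝ) / (b : ℝ) ^ n)| := by
        rw [adicApprox, adicApprox]
    _ ≤ (d : ℝ) * supIncr b n f := htele
    _ ≤ (b : ℝ) * supIncr b n f := by nlinarith

lemma mid_le (b n : ℕ) (hb : 2 ≤ b) (f : ℝ → ℝ) (δ : ℝ)
    (hδB : δ * (b : ℝ) ^ n ≤ (b : ℝ)) {u v : ℝ}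
    (hu : u ∈ Set.Icc (0 : ℝ) 1) (hv : v ∈ Set.Icc (0 : ℝ) 1)
    (huv : |u - v| ≤ δ) :
    |f (adicApprox b n u) - f (adicApprox b n v)| ≤ (b : ℝ) * supIncr b n f := by
  rw [abs_le] at huv
  rcases le_total (adicN b n v) (adicN b n u) with h | h
  · exact mid_one b n hb f δ hδB hu hv (by linarith [huv.2]) h
  · rw [abs_sub_comm]
    exact mid_one b n hb f δ hδB hv hu (by linarith [huv.1]) h

/-- For every continuous `f : [0,1] → ℝ` and `δ ∈ (0,1)`,
`ω(f,δ) ≤ 2(b-1) ∑_{j ≥ log(1/δ)/log b} sup_{w ∈ A^j} |Δ(f, I_w)|`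
(the right-hand side is computed in `ℝ≥0∞`, so that it may be infinite). -/
theorem stmt_9 (b : ℕ) (hb : 2 ≤ b) (f : ℝ → ℝ)
    (hf : ContinuousOn f (Set.Icc (0 : ℝ) 1)) (δ : ℝ) (hδ : 0 < δ) (hδ' : δ < 1) :
    ENNReal.ofReal (modCont f δ) ≤
      2 * ((b : ℝ≥0∞) - 1) *
        ∑' j : {j : ℕ // Real.log (1 / δ) / Real.log b ≤ (j : ℝ)},
          ENNReal.ofReal (⨆ w : Fin (j : ℕ) → Fin b, |badicIncr b (j : ℕ) f w|) := by
  have hb1 : (1 : ℝ) < (b : ℝ) := by exact_mod_cast by omega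
  have hlogb : 0 < Real.log b := Real.log_pos hb1
  set L := Real.log (1 / δ) / Real.log b with hL
  have hL0 : 0 < L := by
    apply div_pos _ hlogb
    apply Real.log_pos
    rw [lt_div_iff₀ hδ]
    linarith
  set n₀ := ⌈L⌉₊ with hn₀
  have hn₀1 : 1 ≤ n₀ := Nat.one_le_iff_ne_zero.2 (by
    simp only [hn₀, ne_eq, Nat.ceil_eq_zero, not_le]
    exact hL0)
  have hLn₀ : L ≤ (n₀ : ℝ) := Nat.le_ceil L
  -- δ * b ^ n₀ ≤ b
  have hδB : δ * (b : ℝ) ^ n₀ ≤ (b : ℝ) := by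
    have hlt : ((n₀ - 1 : ℕ) : ℝ) < L := by
      by_contra h
      push_neg at h
      have := Nat.ceil_le.2 h
      omega
    have hlog : Real.log ((b : ℝ) ^ (n₀ - 1 : ℕ)) < Real.log (1 / δ) := by
      rw [Real.log_pow]
      rw [hL, lt_div_iff₀ hlogb] at hlt
      linarith
    have hpow : (b : ℝ) ^ (n₀ - 1 : ℕ) < 1 / δ := by
      have h01 : (0 : ℝ) < (b : ℝ) ^ (n₀ - 1 : ℕ) := by positivity
      rwa [Real.log_lt_log_iff h01 (by positivity)] at hlog
    have h1 : δ * (b : ℝ) ^ (n₀ - 1 : ℕ) < 1 := by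
      rw [lt_div_iff₀ hδ] at hpow
      nlinarith
    have hsplit : (b : ℝ) ^ n₀ = (b : ℝ) ^ (n₀ - 1 : ℕ) * (b : ℝ) := by
      rw [← pow_succ]
      congr 1
      omega
    rw [hsplit]
    nlinarith
  -- ENNReal quantities
  set G2 : ℕ → ℝ≥0∞ := fun j => if n₀ < j then ENNReal.ofReal (supIncr b j f) else 0 with hG2
  set U := ∑' j : ℕ, G2 j with hU
  set g₀ := ENNReal.ofReal (supIncr b n₀ f) with hg₀
  set T := ∑' j : {j : ℕ // L ≤ (j : ℝ)},
      ENNReal.ofReal (⨆ w : Fin (j : ℕ) → Fin b, |badicIncr b (j : ℕ) f w|) with hT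
  have hC : ENNReal.ofReal ((b : ℝ) - 1) = (b : ℝ≥0∞) - 1 := by
    rw [ENNReal.ofReal_sub _ zero_le_one, ENNReal.ofReal_one, ENNReal.ofReal_natCast]
  have hsub1 : ((b : ℕ) : ℝ≥0∞) - 1 = ((b - 1 : ℕ) : ℝ≥0∞) := by
    rw [show ((b : ℕ) : ℝ≥0∞) = ((b - 1 : ℕ) : ℝ≥0∞) + 1 by
      rw [show ((b - 1 : ℕ) : ℝ≥0∞) + 1 = (((b - 1) + 1 : ℕ) : ℝ≥0∞) by push_cast; ring]
      congr 1
      omega]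
    exact ENNReal.add_sub_cancel_right ENNReal.one_ne_top
  have hKle : ((b : ℕ) : ℝ≥0∞) ≤ 2 * ((b : ℝ≥0∞) - 1) := by
    calc ((b : ℕ) : ℝ≥0∞) ≤ ((2 * (b - 1) : ℕ) : ℝ≥0∞) := Nat.cast_le.2 (by omega)
      _ = 2 * ((b - 1 : ℕ) : ℝ≥0∞) := by push_cast; ring
      _ = 2 * ((b : ℝ≥0∞) - 1) := by rw [hsub1]
  -- g₀ + U ≤ T
  have hTsub : g₀ + U ≤ T := by
    have hind : T = ∑' j : ℕ,
        Set.indicator {j : ℕ | L ≤ (j : ℝ)} (fun j => ENNReal.ofReal (supIncr b j f)) j := by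
      have h0 : T = ∑' j : {j : ℕ // L ≤ (j : ℝ)}, ENNReal.ofReal (supIncr b (j : ℕ) f) := by
        rw [hT]; rfl
      rw [h0]
      exact tsum_subtype {j : ℕ | L ≤ (j : ℝ)} (fun j => ENNReal.ofReal (supIncr b j f))
    have hG3 : ∀ j : ℕ,
        (if j = n₀ then g₀ else 0) + G2 j ≤
          Set.indicator {j : ℕ | L ≤ (j : ℝ)} (fun j => ENNReal.ofReal (supIncr b j f)) j := by
      intro j
      simp only [hG2, Set.indicator_apply, Set.mem_setOf_eq]
      by_cases hj : j = n₀
      · subst hj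
        rw [if_pos rfl, if_neg (lt_irrefl n₀), add_zero, if_pos hLn₀]
      · rw [if_neg hj, zero_add]
        by_cases hj' : n₀ < j
        · have hjL : L ≤ (j : ℝ) := by
            have h1 : ((n₀ : ℕ) : ℝ) ≤ ((j : ℕ) : ℝ) := Nat.cast_le.2 (by omega)
            linarith
          rw [if_pos hj', if_pos hjL]
        · rw [if_neg hj']
          exact zero_le
    calc g₀ + U = ∑' j : ℕ, ((if j = n₀ then g₀ else 0) + G2 j) := by
          rw [ENNReal.tsum_add, tsum_ite_eq]
      _ ≤ ∑' j : ℕ,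
            Set.indicator {j : ℕ | L ≤ (j : ℝ)} (fun j => ENNReal.ofReal (supIncr b j f)) j :=
          ENNReal.tsum_le_tsum hG3
      _ = T := hind.symm
  -- pointwise pair bound
  have pair : ∀ t s : ℝ, t ∈ Set.Icc (0 : ℝ) 1 → s ∈ Set.Icc (0 : ℝ) 1 → |t - s| ≤ δ →
      ENNReal.ofReal |f t - f s| ≤ 2 * ((b : ℝ≥0∞) - 1) * T := by
    intro t s ht hs hts
    have htri : |f t - f s| ≤ |f t - f (adicApprox b n₀ t)|
        + |f (adicApprox b n₀ t) - f (adicApprox b n₀ s)|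
        + |f s - f (adicApprox b n₀ s)| := by
      have := abs_sub_le (f t) (f (adicApprox b n₀ s)) (f s)
      have h2 := abs_sub_le (f t) (f (adicApprox b n₀ t)) (f (adicApprox b n₀ s))
      have h3 : |f (adicApprox b n₀ s) - f s| = |f s - f (adicApprox b n₀ s)| :=
        abs_sub_comm _ _
      linarith [abs_sub_le (f t) (f (adicApprox b n₀ s)) (f s)]
    have e1 := tail_ennreal b hb f hf ht n₀
    have e3 := tail_ennreal b hb f hf hs n₀
    have e2 : ENNReal.ofReal |f (adicApprox b n₀ t) - f (adicApprox b n₀ s)|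
        ≤ ((b : ℕ) : ℝ≥0∞) * g₀ := by
      have := mid_le b n₀ hb f δ hδB ht hs hts
      calc ENNReal.ofReal |f (adicApprox b n₀ t) - f (adicApprox b n₀ s)|
          ≤ ENNReal.ofReal ((b : ℝ) * supIncr b n₀ f) := ENNReal.ofReal_le_ofReal this
        _ = ENNReal.ofReal (b : ℝ) * g₀ :=
            ENNReal.ofReal_mul (by positivity)
        _ = ((b : ℕ) : ℝ≥0∞) * g₀ := by rw [ENNReal.ofReal_natCast]
    calc ENNReal.ofReal |f t - f s|
        ≤ ENNReal.ofReal (|f t - f (adicApprox b n₀ t)|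
            + |f (adicApprox b n₀ t) - f (adicApprox b n₀ s)|
            + |f s - f (adicApprox b n₀ s)|) := ENNReal.ofReal_le_ofReal htri
      _ ≤ ENNReal.ofReal (|f t - f (adicApprox b n₀ t)|
            + |f (adicApprox b n₀ t) - f (adicApprox b n₀ s)|)
            + ENNReal.ofReal |f s - f (adicApprox b n₀ s)| := ENNReal.ofReal_add_le
      _ ≤ ENNReal.ofReal |f t - f (adicApprox b n₀ t)|
            + ENNReal.ofReal |f (adicApprox b n₀ t) - f (adicApprox b n₀ s)|
            + ENNReal.ofReal |f s - f (adicApprox b n₀ s)| :=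
          add_le_add_left ENNReal.ofReal_add_le _
      _ ≤ ENNReal.ofReal ((b : ℝ) - 1) * U + ((b : ℕ) : ℝ≥0∞) * g₀
            + ENNReal.ofReal ((b : ℝ) - 1) * U := add_le_add (add_le_add e1 e2) e3
      _ = ((b : ℝ≥0∞) - 1) * U + ((b : ℕ) : ℝ≥0∞) * g₀ + ((b : ℝ≥0∞) - 1) * U := by
          rw [hC]
      _ ≤ ((b : ℝ≥0∞) - 1) * U + (2 * ((b : ℝ≥0∞) - 1)) * g₀ + ((b : ℝ≥0∞) - 1) * U :=
          add_le_add_left (add_le_add_right (mul_le_mul_left hKle _) _) _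
      _ = 2 * ((b : ℝ≥0∞) - 1) * (g₀ + U) := by ring
      _ ≤ 2 * ((b : ℝ≥0∞) - 1) * T := mul_le_mul_right hTsub _
  -- conclude
  rcases eq_or_ne (2 * ((b : ℝ≥0∞) - 1) * T) ⊤ with htop | hne
  · rw [htop]
    exact le_top
  · haveI : Nonempty {q : ℝ × ℝ // q.1 ∈ Set.Icc (0 : ℝ) 1 ∧ q.2 ∈ Set.Icc (0 : ℝ) 1
        ∧ |q.1 - q.2| ≤ δ} :=
      ⟨⟨(0, 0), ⟨⟨le_refl _, zero_le_one⟩, ⟨le_refl _, zero_le_one⟩, by simp [hδ.le]⟩⟩⟩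
    have hsup : modCont f δ ≤ (2 * ((b : ℝ≥0∞) - 1) * T).toReal := by
      refine ciSup_le fun p => ?_
      have hp := pair p.1.1 p.1.2 p.2.1 p.2.2.1 p.2.2.2
      have := ENNReal.toReal_mono hne hp
      rwa [ENNReal.toReal_ofReal (abs_nonneg _)] at this
    calc ENNReal.ofReal (modCont f δ)
        ≤ ENNReal.ofReal (2 * ((b : ℝ≥0∞) - 1) * T).toReal := ENNReal.ofReal_le_ofReal hsup
      _ = 2 * ((b : ℝ≥0∞) - 1) * T := ENNReal.ofReal_toReal hne
end

section
/- (Finite additivity of the additive-cascade random measure.) Let b ≥ 2 be an integer and let (ξ(w)), indexed by the nonempty words over A = {0,…,b−1}, be i.i.d. standard normal random variables. For each nonempty word w, set ζ(w) = √(b−1)·lim_{n→∞} ∑_{j=1}^n b^{−j} ∑_{v∈A^j} ξ(wv) (the limit exists almost surely and in L²), S(w) = ∑_{k=1}^{|w|} ξ(w|_k), and M([w]) = b^{−|w|}·( ζ(w) + √(b−1)·S(w) ). Then almost surely, for every nonempty word w, M([w]) = ∑_{ℓ∈A} M([wℓ]); i.e., M defines a finitely additive random measure on the cylinders of A^ω.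 -/
open MeasureTheory Filter
open scoped ProbabilityTheory

/-- The type of nonempty words over the alphabet `{0,…,b-1}` (the component `n : ℕ`
carries words of length `n+1`). -/
def Word (b : ℕ) : Type := Σ n : ℕ, Fin (n + 1) → Fin b

/-- The length `|w|` of a word. -/
def wordLen {b : ℕ} (w : Word b) : ℕ := w.1 + 1

/-- The prefix `w|_{k+1}` of length `k+1` of a nonempty word `w`. -/
def wordPrefix {b : ℕ} (w : Word b) (k : Fin (w.1 + 1)) : Word b :=
  ⟨(k : ℕ), fun i => w.2 ⟨(i : ℕ), by omega⟩⟩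

/-- The word `wℓ` obtained by appending the letter `ℓ` to the word `w`. -/
def wordSnoc {b : ℕ} (w : Word b) (ℓ : Fin b) : Word b :=
  ⟨w.1 + 1, Fin.snoc w.2 ℓ⟩

/-- Concatenation `wv` of two nonempty words. -/
def wordAppend {b : ℕ} (w v : Word b) : Word b :=
  ⟨w.1 + 1 + v.1, fun i => Fin.append w.2 v.2 (Fin.cast (by omega) i)⟩

/-- The branching random walk `S(w) = ∑_{k=1}^{|w|} ξ(w|_k)`. -/
noncomputable def brwS {b : ℕ} {Ω : Type*} (ξ : Word b → Ω → ℝ) (w : Word b) (ω : Ω) : ℝ :=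
  ∑ k : Fin (w.1 + 1), ξ (wordPrefix w k) ω

/-- The additive-cascade measure of the cylinder `[w]`:
`M([w]) = b^{-|w|} (ζ(w) + √(b-1) S(w))`. -/
noncomputable def cascadeM {b : ℕ} {Ω : Type*} (ξ ζ : Word b → Ω → ℝ)
    (w : Word b) (ω : Ω) : ℝ :=
  (b : ℝ) ^ (-(wordLen w : ℤ)) * (ζ w ω + Real.sqrt ((b : ℝ) - 1) * brwS ξ w ω)

instance wordCountable (b : ℕ) : Countable (Word b) := by
  unfold Word; infer_instance

lemma wordAppend_zero {b : ℕ} (w : Word b) (v : Fin 1 → Fin b) :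
    wordAppend w ⟨0, v⟩ = wordSnoc w (v 0) := by
  unfold wordAppend wordSnoc
  apply Sigma.ext (by rfl)
  rw [heq_iff_eq]
  funext i
  rw [Fin.append_right_eq_snoc]
  exact congrArg _ (Fin.ext rfl)

lemma wordAppend_cons {b : ℕ} (w : Word b) (ℓ : Fin b) (j : ℕ) (v : Fin (j + 1) → Fin b) :
    wordAppend (wordSnoc w ℓ) ⟨j, v⟩ = wordAppend w ⟨j + 1, Fin.cons ℓ v⟩ := by
  unfold wordAppend wordSnoc
  apply Sigma.ext (by simp; omega)
  rw [Fin.heq_fun_iff (by simp; omega)]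
  intro i
  rw [Fin.append_left_snoc]
  exact congrArg _ (Fin.ext rfl)

lemma sum_words_zero {b : ℕ} (u : Word b) (f : Word b → ℝ) :
    ∑ v : Fin (0 + 1) → Fin b, f (wordAppend u ⟨0, v⟩)
      = ∑ ℓ : Fin b, f (wordSnoc u ℓ) := by
  simp_rw [wordAppend_zero]
  rw [← Equiv.sum_comp (Equiv.funUnique (Fin 1) (Fin b)).symm
    (fun v : Fin 1 → Fin b => f (wordSnoc u (v 0)))]
  rfl

lemma sum_words_succ {b : ℕ} (u : Word b) (j : ℕ) (f : Word b → ℝ) :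
    ∑ v : Fin (j + 1 + 1) → Fin b, f (wordAppend u ⟨j + 1, v⟩)
      = ∑ ℓ : Fin b, ∑ v : Fin (j + 1) → Fin b, f (wordAppend (wordSnoc u ℓ) ⟨j, v⟩) := by
  simp_rw [wordAppend_cons]
  rw [← Equiv.sum_comp (Fin.consEquiv (fun _ : Fin (j + 1 + 1) => Fin b))
    (fun v : Fin (j + 1 + 1) → Fin b => f (wordAppend u ⟨j + 1, v⟩)),
    Fintype.sum_prod_type]
  rfl

lemma wordPrefix_snoc_castSucc {b : ℕ} (w : Word b) (ℓ : Fin b) (k : Fin (w.1 + 1)) :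
    wordPrefix (wordSnoc w ℓ) (Fin.castSucc k) = wordPrefix w k := by
  unfold wordPrefix wordSnoc
  apply Sigma.ext (by rfl)
  rw [Fin.heq_fun_iff (by rfl)]
  intro i
  have hik : (i : ℕ) < (k : ℕ) + 1 := i.isLt
  have hkw : (k : ℕ) < w.1 + 1 := k.isLt
  have hi : (i : ℕ) < w.1 + 1 := by omega
  simp only [Fin.snoc, hi, dif_pos, Fin.castLT]
  simp

lemma wordPrefix_snoc_last {b : ℕ} (w : Word b) (ℓ : Fin b) :
    wordPrefix (wordSnoc w ℓ) (Fin.last (w.1 + 1)) = wordSnoc w ℓ := by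
  unfold wordPrefix wordSnoc
  apply Sigma.ext (by rfl)
  rw [heq_iff_eq]
  funext i
  exact congrArg _ (Fin.ext rfl)

lemma brwS_snoc {b : ℕ} {Ω : Type*} (ξ : Word b → Ω → ℝ) (w : Word b) (ℓ : Fin b) (ω : Ω) :
    brwS ξ (wordSnoc w ℓ) ω = brwS ξ w ω + ξ (wordSnoc w ℓ) ω := by
  unfold brwS
  show (∑ k : Fin (w.1 + 1 + 1), ξ (wordPrefix (wordSnoc w ℓ) k) ω) = _
  rw [Fin.sum_univ_castSucc]
  exact congrArg₂ (· + ·)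
    (Finset.sum_congr rfl fun k _ => congrArg (fun x => ξ x ω) (wordPrefix_snoc_castSucc w ℓ k))
    (congrArg (fun x => ξ x ω) (wordPrefix_snoc_last w ℓ))

/-- finite additivity of the additive-cascade random measure.
With `(ξ w)` i.i.d. standard normal and `ζ(w)` the a.s. limit of
`√(b-1) ∑_{j=1}^n b^{-j} ∑_{v ∈ A^j} ξ(wv)`, almost surely, for every nonempty word
`w`, `M([w]) = ∑_{ℓ ∈ A} M([wℓ])`. -/
theorem stmt_13 {Ω : Type*} [MeasureSpace Ω] [IsProbabilityMeasure (ℙ : Measure Ω)]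
    (b : ℕ) (hb : 2 ≤ b)
    (ξ : Word b → Ω → ℝ)
    (hmeas : ∀ w, Measurable (ξ w))
    (hindep : ProbabilityTheory.iIndepFun ξ ℙ)
    (hlaw : ∀ w, Measure.map (ξ w) ℙ = ProbabilityTheory.gaussianReal 0 1)
    (ζ : Word b → Ω → ℝ)
    (hζ : ∀ w, ∀ᵐ ω ∂ℙ, Tendsto
      (fun n => Real.sqrt ((b : ℝ) - 1) * ∑ j ∈ Finset.range n,
        (b : ℝ) ^ (-((j : ℤ) + 1)) *
          ∑ v : Fin (j + 1) → Fin b, ξ (wordAppend w ⟨j, v⟩) ω)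
      atTop (nhds (ζ w ω))) :
    ∀ᵐ ω ∂ℙ, ∀ w : Word b,
      cascadeM ξ ζ w ω = ∑ ℓ : Fin b, cascadeM ξ ζ (wordSnoc w ℓ) ω := by
  have hb0 : (b : ℝ) ≠ 0 := by positivity
  filter_upwards [ae_all_iff.mpr hζ] with ω hω
  intro w
  set s : ℝ := Real.sqrt ((b : ℝ) - 1) with hs
  set F : Word b → ℕ → ℝ := fun u n => s * ∑ j ∈ Finset.range n,
      (b : ℝ) ^ (-((j : ℤ) + 1)) *
        ∑ v : Fin (j + 1) → Fin b, ξ (wordAppend u ⟨j, v⟩) ω with hF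
  have hωF : ∀ u, Tendsto (F u) atTop (nhds (ζ u ω)) := fun u => hω u
  -- recursion for the partial sums
  have hrec : ∀ (u : Word b) (n : ℕ),
      F u (n + 1) = s * (b : ℝ)⁻¹ * (∑ ℓ : Fin b, ξ (wordSnoc u ℓ) ω)
        + (b : ℝ)⁻¹ * ∑ ℓ : Fin b, F (wordSnoc u ℓ) n := by
    intro u n
    simp only [hF]
    rw [Finset.sum_range_succ' (fun j => (b : ℝ) ^ (-((j : ℤ) + 1)) *
        ∑ v : Fin (j + 1) → Fin b, ξ (wordAppend u ⟨j, v⟩) ω) n]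
    have h1 : ∀ i ∈ Finset.range n,
        (b : ℝ) ^ (-(((i + 1 : ℕ) : ℤ) + 1)) *
          ∑ v : Fin (i + 1 + 1) → Fin b, ξ (wordAppend u ⟨i + 1, v⟩) ω
        = (b : ℝ)⁻¹ * ∑ ℓ : Fin b, (b : ℝ) ^ (-((i : ℤ) + 1)) *
            ∑ v : Fin (i + 1) → Fin b, ξ (wordAppend (wordSnoc u ℓ) ⟨i, v⟩) ω := by
      intro i _
      rw [sum_words_succ u i (fun x => ξ x ω)]
      rw [Finset.mul_sum, Finset.mul_sum]
      refine Finset.sum_congr rfl fun ℓ _ => ?_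
      rw [show (-(((i + 1 : ℕ) : ℤ) + 1)) = (-1) + (-((i : ℤ) + 1)) by push_cast; ring,
        zpow_add₀ hb0, zpow_neg_one]
      ring
    rw [Finset.sum_congr rfl h1, sum_words_zero u (fun x => ξ x ω)]
    have h2 : ∑ j ∈ Finset.range n, ((b : ℝ)⁻¹ * ∑ ℓ : Fin b,
          (b : ℝ) ^ (-((j : ℤ) + 1)) *
            ∑ v : Fin (j + 1) → Fin b, ξ (wordAppend (wordSnoc u ℓ) ⟨j, v⟩) ω)
        = (b : ℝ)⁻¹ * ∑ ℓ : Fin b, ∑ j ∈ Finset.range n,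
            (b : ℝ) ^ (-((j : ℤ) + 1)) *
              ∑ v : Fin (j + 1) → Fin b, ξ (wordAppend (wordSnoc u ℓ) ⟨j, v⟩) ω := by
      rw [← Finset.mul_sum, Finset.sum_comm]
    rw [h2]
    have h3 : (b : ℝ) ^ (-(((0 : ℕ) : ℤ) + 1)) = (b : ℝ)⁻¹ := by norm_num
    rw [h3]
    conv_rhs => rw [← Finset.mul_sum]
    ring
  -- the key identity for ζ
  have key : ∀ u : Word b,
      ζ u ω = s * (b : ℝ)⁻¹ * (∑ ℓ : Fin b, ξ (wordSnoc u ℓ) ω)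
        + (b : ℝ)⁻¹ * ∑ ℓ : Fin b, ζ (wordSnoc u ℓ) ω := by
    intro u
    have h1 : Tendsto (fun n => F u (n + 1)) atTop (nhds (ζ u ω)) :=
      (hωF u).comp (tendsto_add_atTop_nat 1)
    have h2 : Tendsto (fun n => s * (b : ℝ)⁻¹ * (∑ ℓ : Fin b, ξ (wordSnoc u ℓ) ω)
        + (b : ℝ)⁻¹ * ∑ ℓ : Fin b, F (wordSnoc u ℓ) n) atTop
        (nhds (s * (b : ℝ)⁻¹ * (∑ ℓ : Fin b, ξ (wordSnoc u ℓ) ω)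
          + (b : ℝ)⁻¹ * ∑ ℓ : Fin b, ζ (wordSnoc u ℓ) ω)) :=
      tendsto_const_nhds.add
        ((tendsto_finset_sum _ fun ℓ _ => hωF (wordSnoc u ℓ)).const_mul _)
    exact tendsto_nhds_unique (h1.congr fun n => hrec u n) h2
  -- final algebra
  unfold cascadeM
  have hpow : ∀ ℓ : Fin b, (b : ℝ) ^ (-(wordLen (wordSnoc w ℓ) : ℤ))
      = (b : ℝ) ^ (-(wordLen w : ℤ)) * (b : ℝ)⁻¹ := by
    intro ℓ
    have : (wordLen (wordSnoc w ℓ) : ℤ) = (wordLen w : ℤ) + 1 := by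
      unfold wordLen wordSnoc; push_cast; ring
    rw [this, neg_add, zpow_add₀ hb0, zpow_neg_one]
  calc (b : ℝ) ^ (-(wordLen w : ℤ)) * (ζ w ω + s * brwS ξ w ω)
      = (b : ℝ) ^ (-(wordLen w : ℤ)) * (b : ℝ)⁻¹ *
        ((∑ ℓ : Fin b, ζ (wordSnoc w ℓ) ω) + s * (∑ ℓ : Fin b, ξ (wordSnoc w ℓ) ω)
          + (b : ℝ) * (s * brwS ξ w ω)) := by
        rw [key w]
        field_simp
        ring
    _ = ∑ ℓ : Fin b, (b : ℝ) ^ (-(wordLen (wordSnoc w ℓ) : ℤ)) *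
        (ζ (wordSnoc w ℓ) ω + s * brwS ξ (wordSnoc w ℓ) ω) := by
        simp_rw [hpow, brwS_snoc]
        rw [← Finset.mul_sum]
        congr 1
        simp only [mul_add, Finset.sum_add_distrib, Finset.sum_const, Finset.card_univ,
          Fintype.card_fin, nsmul_eq_mul, Finset.mul_sum]
        ring
end

section
/- Let b ≥ 2 be an integer, (ξ(w)) i.i.d. standard normals indexed by nonempty words over A = {0,…,b−1}, and define M([w]) = b^{−|w|}·( ζ(w) + √(b−1)·S(w) ) as in the context. Then, with probability 1, for every ε > 0 one has sup_{v∈A^n} |M([v])| = o( b^{−n(1−ε)} ) as n → ∞. -/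
open MeasureTheory Filter Asymptotics
open scoped ProbabilityTheory

section Aux
open MeasureTheory Filter Real ProbabilityTheory Asymptotics
open scoped ENNReal NNReal

set_option linter.unusedSectionVars false
set_option maxHeartbeats 1000000



instance {b : ℕ} : DecidableEq (Word b) :=
  inferInstanceAs (DecidableEq (Σ n : ℕ, Fin (n + 1) → Fin b))

lemma wordAppend_injective {b : ℕ} (w : Word b) : Function.Injective (wordAppend w) := by
  rintro ⟨m, f⟩ ⟨k, g⟩ h
  have h1 : m = k := by
    have := congrArg Sigma.fst h
    simpa [wordAppend] using this
  subst h1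
  have h2 : (wordAppend w ⟨m, f⟩).2 = (wordAppend w ⟨m, g⟩).2 :=
    eq_of_heq (Sigma.mk.inj_iff.mp h).2
  congr 1
  funext i
  have hi := i.isLt
  have key : ∀ (f' : Fin (m+1) → Fin b),
      (wordAppend w ⟨m, f'⟩).2 ⟨w.1 + 1 + i.1, by show w.1+1+i.1 < w.1+1+m+1; omega⟩ = f' i := by
    intro f'
    show Fin.append w.2 f' (Fin.cast _ _) = f' i
    have e1 : (Fin.cast (by omega : w.1 + 1 + m + 1 = w.1 + 1 + (m + 1))
        (⟨w.1 + 1 + i.1, by omega⟩ : Fin (w.1 + 1 + m + 1)))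
        = Fin.natAdd (w.1+1) i := by
      apply Fin.ext; simp
    exact (congrArg (Fin.append w.2 f') e1).trans (Fin.append_right w.2 f' i)
  have h3 := congrFun h2 ⟨w.1 + 1 + i.1, by show w.1+1+i.1 < w.1+1+m+1; omega⟩
  exact (key f).symm.trans (h3.trans (key g))

def wSk (b k : ℕ) : Finset (Word b) :=
  (Finset.range k).sigma (fun j => (Finset.univ : Finset (Fin (j+1) → Fin b)))

lemma sum_words {b : ℕ} (w : Word b) {M : Type*} [AddCommMonoid M] (k : ℕ) (F : Word b → M) :
    ∑ u ∈ (wSk b k).image (wordAppend w), F u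
      = ∑ j ∈ Finset.range k, ∑ v : Fin (j+1) → Fin b, F (wordAppend w ⟨j, v⟩) := by
  rw [Finset.sum_image (fun x _ y _ h => wordAppend_injective w h)]
  exact Finset.sum_sigma (Finset.range k) (fun j => Finset.univ) (fun x => F (wordAppend w x))

noncomputable def cw {b : ℕ} (w u : Word b) : ℝ :=
  Real.sqrt ((b : ℝ) - 1) * (((b:ℝ) ^ (u.1 - w.1 : ℕ))⁻¹)

lemma zpow_eq {b : ℕ} (j : ℕ) : (b : ℝ) ^ (-((j : ℤ) + 1)) = (((b:ℝ) ^ (j+1 : ℕ))⁻¹) := by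
  have : (-((j:ℤ)+1)) = -((j+1 : ℕ) : ℤ) := by push_cast; ring
  rw [this, zpow_neg, zpow_natCast]

lemma cw_append {b : ℕ} (w : Word b) (j : ℕ) (v : Fin (j+1) → Fin b) :
    cw w (wordAppend w ⟨j, v⟩) = Real.sqrt ((b : ℝ) - 1) * (((b:ℝ) ^ (j+1 : ℕ))⁻¹) := by
  have : (wordAppend w ⟨j, v⟩).1 - w.1 = j + 1 := by
    show (w.1 + 1 + j) - w.1 = j + 1; omega
  rw [cw, this]

lemma Zpart_eq {b : ℕ} {Ω : Type*} (ξ : Word b → Ω → ℝ) (w : Word b) (k : ℕ) (ω : Ω) :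
    Real.sqrt ((b : ℝ) - 1) * ∑ j ∈ Finset.range k,
      (b : ℝ) ^ (-((j : ℤ) + 1)) * ∑ v : Fin (j + 1) → Fin b, ξ (wordAppend w ⟨j, v⟩) ω
    = ∑ u ∈ (wSk b k).image (wordAppend w), cw w u * ξ u ω := by
  rw [sum_words, Finset.mul_sum]
  refine Finset.sum_congr rfl (fun j hj => ?_)
  rw [Finset.mul_sum, Finset.mul_sum]
  refine Finset.sum_congr rfl (fun v hv => ?_)
  rw [cw_append, zpow_eq]
  ring

lemma sum_sq_cw_le {b : ℕ} (hb : 2 ≤ b) (w : Word b) (k : ℕ) :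
    ∑ u ∈ (wSk b k).image (wordAppend w), (cw w u)^2 ≤ 1 := by
  have hb1 : (1:ℝ) < (b:ℝ) := by exact_mod_cast hb.trans_lt' one_lt_two
  have hb0 : (0:ℝ) < (b:ℝ) := lt_trans one_pos hb1
  rw [sum_words]
  have key : ∀ j ∈ Finset.range k,
      (∑ v : Fin (j+1) → Fin b, (cw w (wordAppend w ⟨j, v⟩))^2)
        = ((b:ℝ) - 1) * (((b:ℝ) ^ (j+1 : ℕ))⁻¹) := by
    intro j _
    have hcard : (Fintype.card (Fin (j+1) → Fin b)) = b ^ (j+1) := by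
      simp [Fintype.card_fun]
    rw [Finset.sum_congr rfl (fun v _ => by rw [cw_append])]
    rw [Finset.sum_const, Finset.card_univ, hcard, nsmul_eq_mul]
    rw [mul_pow, Real.sq_sqrt (by linarith : (0:ℝ) ≤ (b:ℝ) - 1)]
    push_cast
    have hpow : (0:ℝ) < (b:ℝ) ^ (j+1) := by positivity
    field_simp
  rw [Finset.sum_congr rfl key]
  have geom : ∀ m : ℕ, ∑ j ∈ Finset.range m, ((b:ℝ) - 1) * (((b:ℝ) ^ (j+1 : ℕ))⁻¹)
      = 1 - ((b:ℝ) ^ m)⁻¹ := by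
    intro m
    induction m with
    | zero => simp
    | succ m ih =>
      rw [Finset.sum_range_succ, ih]
      have h1 : ((b:ℝ) ^ (m+1)) ≠ 0 := by positivity
      have h2 : ((b:ℝ) ^ m) ≠ 0 := by positivity
      field_simp
      ring
  rw [geom k]
  have : (0:ℝ) ≤ ((b:ℝ) ^ k)⁻¹ := by positivity
  linarith

section Prob

lemma gauss_shift (t : ℝ) (x : ℝ) :
    gaussianPDFReal 0 1 x * Real.exp (t * x)
      = Real.exp (t^2/2) * gaussianPDFReal 0 1 (x - t) := by
  simp only [gaussianPDFReal, NNReal.coe_one, mul_one, sub_zero]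
  rw [mul_assoc, ← Real.exp_add, mul_comm (Real.exp _), mul_assoc, ← Real.exp_add]
  ring_nf

lemma integral_exp_mul_gaussianReal (t : ℝ) :
    ∫ x, Real.exp (t * x) ∂(gaussianReal 0 1) = Real.exp (t^2/2) := by
  rw [gaussianReal_of_var_ne_zero 0 one_ne_zero,
    show (gaussianPDF 0 1) = (fun x => ((gaussianPDFReal 0 1 x).toNNReal : ℝ≥0∞)) from rfl,
    integral_withDensity_eq_integral_smul (measurable_gaussianPDFReal 0 1).real_toNNReal]
  have : ∀ x : ℝ, (gaussianPDFReal 0 1 x).toNNReal • Real.exp (t * x)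
      = Real.exp (t^2/2) * gaussianPDFReal 0 1 (x - t) := by
    intro x
    rw [NNReal.smul_def, Real.coe_toNNReal _ (gaussianPDFReal_nonneg 0 1 x)]
    exact gauss_shift t x
  simp_rw [this]
  rw [integral_const_mul, integral_sub_right_eq_self (fun a => gaussianPDFReal 0 1 a) t,
    integral_gaussianPDFReal_eq_one 0 one_ne_zero, mul_one]

lemma integrable_exp_mul_gaussianReal (t : ℝ) :
    Integrable (fun x => Real.exp (t * x)) (gaussianReal 0 1) := by
  rw [gaussianReal_of_var_ne_zero 0 one_ne_zero,
    integrable_withDensity_iff (measurable_gaussianPDF 0 1)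
      (Filter.Eventually.of_forall fun x => ENNReal.ofReal_lt_top)]
  have : ∀ x : ℝ, Real.exp (t * x) * (gaussianPDF 0 1 x).toReal
      = Real.exp (t^2/2) * gaussianPDFReal 0 1 (x - t) := by
    intro x
    rw [gaussianPDF, ENNReal.toReal_ofReal (gaussianPDFReal_nonneg 0 1 x), mul_comm]
    exact gauss_shift t x
  simp_rw [this]
  exact ((integrable_gaussianPDFReal 0 1).comp_sub_right t).const_mul _

variable {Ω : Type*} [MeasureSpace Ω] [IsProbabilityMeasure (ℙ : Measure Ω)]

lemma integrable_exp_mul_std {X : Ω → ℝ} (hX : Measurable X)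
    (hlaw : Measure.map X ℙ = gaussianReal 0 1) (t : ℝ) :
    Integrable (fun ω => Real.exp (t * X ω)) ℙ := by
  have h := _root_.integrable_exp_mul_gaussianReal t
  rw [← hlaw] at h
  exact (integrable_map_measure
    (Measurable.aestronglyMeasurable (show Measurable fun x : ℝ => Real.exp (t*x) from Measurable.exp (measurable_const_mul t))) hX.aemeasurable).mp h

lemma mgf_std {X : Ω → ℝ} (hX : Measurable X)
    (hlaw : Measure.map X ℙ = gaussianReal 0 1) (t : ℝ) :
    mgf X ℙ t = Real.exp (t^2/2) := by
  have h := integral_exp_mul_gaussianReal t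
  rw [← hlaw, integral_map hX.aemeasurable (Measurable.aestronglyMeasurable (show Measurable fun x : ℝ => Real.exp (t*x) from Measurable.exp (measurable_const_mul t)))] at h
  exact h

lemma chernoff {X : Ω → ℝ} (hmgf : ∀ t, mgf X ℙ t ≤ Real.exp (t^2/2))
    (hint : ∀ t, Integrable (fun ω => Real.exp (t * X ω)) ℙ) {a : ℝ} (ha : 0 ≤ a) :
    ℙ {ω | a ≤ X ω} ≤ ENNReal.ofReal (Real.exp (-(a^2)/2)) := by
  have h := measure_ge_le_exp_mul_mgf (X := X) (μ := ℙ) (t := a) a ha (hint a)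
  have h2 : Real.exp (-a * a) * mgf X ℙ a ≤ Real.exp (-(a^2)/2) := by
    calc Real.exp (-a * a) * mgf X ℙ a
        ≤ Real.exp (-a * a) * Real.exp (a^2/2) := by
          exact mul_le_mul_of_nonneg_left (hmgf a) (Real.exp_nonneg _)
      _ = Real.exp (-(a^2)/2) := by rw [← Real.exp_add]; ring_nf
  rw [← ENNReal.ofReal_toReal (measure_ne_top ℙ {ω | a ≤ X ω})]
  exact ENNReal.ofReal_le_ofReal (h.trans h2)

lemma chernoff_abs {X : Ω → ℝ} (hmgf : ∀ t, mgf X ℙ t ≤ Real.exp (t^2/2))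
    (hint : ∀ t, Integrable (fun ω => Real.exp (t * X ω)) ℙ) {a : ℝ} (ha : 0 ≤ a) :
    ℙ {ω | a ≤ |X ω|} ≤ ENNReal.ofReal (2 * Real.exp (-(a^2)/2)) := by
  have hsub : {ω | a ≤ |X ω|} ⊆ {ω | a ≤ X ω} ∪ {ω | a ≤ -X ω} := by
    intro ω hω
    rcases abs_cases (X ω) with ⟨h1, _⟩ | ⟨h1, _⟩
    · left; simpa [h1] using hω
    · right; simpa [h1] using hω
  have hneg : ℙ {ω | a ≤ -X ω} ≤ ENNReal.ofReal (Real.exp (-(a^2)/2)) := by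
    refine chernoff (X := fun ω => -X ω) (fun t => ?_) (fun t => ?_) ha
    · have : mgf (fun ω => -X ω) ℙ t = mgf X ℙ (-t) := by
        simp only [mgf, mul_neg, neg_mul]
      rw [this]
      simpa [neg_pow] using hmgf (-t)
    · simpa [mul_neg, neg_mul] using hint (-t)
  calc ℙ {ω | a ≤ |X ω|} ≤ ℙ ({ω | a ≤ X ω} ∪ {ω | a ≤ -X ω}) := measure_mono hsub
    _ ≤ ℙ {ω | a ≤ X ω} + ℙ {ω | a ≤ -X ω} := measure_union_le _ _
    _ ≤ ENNReal.ofReal (Real.exp (-(a^2)/2)) + ENNReal.ofReal (Real.exp (-(a^2)/2)) := by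
        exact add_le_add (chernoff hmgf hint ha) hneg
    _ = ENNReal.ofReal (2 * Real.exp (-(a^2)/2)) := by
        rw [← ENNReal.ofReal_add (Real.exp_nonneg _) (Real.exp_nonneg _)]; ring_nf

end Prob
section Main
variable {Ω : Type*} [MeasureSpace Ω] [IsProbabilityMeasure (ℙ : Measure Ω)]
variable {b : ℕ}

lemma mgf_Zpart {ξ : Word b → Ω → ℝ} (hb : 2 ≤ b)
    (hmeas : ∀ w, Measurable (ξ w))
    (hindep : iIndepFun ξ ℙ)
    (hlaw : ∀ w, Measure.map (ξ w) ℙ = gaussianReal 0 1)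
    (w : Word b) (k : ℕ) (t : ℝ) :
    mgf (fun ω => Real.sqrt ((b : ℝ) - 1) * ∑ j ∈ Finset.range k,
      (b : ℝ) ^ (-((j : ℤ) + 1)) * ∑ v : Fin (j + 1) → Fin b, ξ (wordAppend w ⟨j, v⟩) ω) ℙ t
      ≤ Real.exp (t^2/2)
    ∧ Integrable (fun ω => Real.exp (t * (Real.sqrt ((b : ℝ) - 1) * ∑ j ∈ Finset.range k,
      (b : ℝ) ^ (-((j : ℤ) + 1)) * ∑ v : Fin (j + 1) → Fin b, ξ (wordAppend w ⟨j, v⟩) ω))) ℙ := by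
  set X' : Word b → Ω → ℝ := fun u ω => cw w u * ξ u ω with hX'
  have hXmeas : ∀ u, Measurable (X' u) := fun u => (hmeas u).const_mul _
  have hXindep : iIndepFun X' ℙ :=
    hindep.comp (fun u x => cw w u * x) (fun u => measurable_const_mul _)
  have hfun : (fun ω => Real.sqrt ((b : ℝ) - 1) * ∑ j ∈ Finset.range k,
      (b : ℝ) ^ (-((j : ℤ) + 1)) * ∑ v : Fin (j + 1) → Fin b, ξ (wordAppend w ⟨j, v⟩) ω)
      = ∑ u ∈ (wSk b k).image (wordAppend w), X' u := by
    funext ω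
    rw [Finset.sum_apply]
    exact Zpart_eq ξ w k ω
  have hmgfX : ∀ u (s : ℝ), mgf (X' u) ℙ s = Real.exp ((s * cw w u)^2/2) := by
    intro u s
    have h1 : mgf (X' u) ℙ s = mgf (ξ u) ℙ (s * cw w u) := by
      simp only [mgf, hX']
      congr 1
      funext ω
      congr 1
      ring
    rw [h1, mgf_std (hmeas u) (hlaw u)]
  have hintX : ∀ u (s : ℝ), Integrable (fun ω => Real.exp (s * X' u ω)) ℙ := by
    intro u s
    have h2 := integrable_exp_mul_std (hmeas u) (hlaw u) (s * cw w u)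
    simp only [hX']
    simpa [mul_assoc] using h2
  constructor
  · rw [hfun, ProbabilityTheory.iIndepFun.mgf_sum hXindep hXmeas]
    have heq : ∀ u ∈ (wSk b k).image (wordAppend w),
        mgf (X' u) ℙ t = Real.exp (t^2/2 * (cw w u)^2) := by
      intro u _
      rw [hmgfX u t]
      congr 1
      ring
    rw [Finset.prod_congr rfl heq, ← Real.exp_sum, ← Finset.mul_sum]
    exact Real.exp_le_exp.2 (mul_le_of_le_one_right (by positivity) (sum_sq_cw_le hb w k))
  · have h4 := ProbabilityTheory.iIndepFun.integrable_exp_mul_sum hXindep hXmeas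
      (s := (wSk b k).image (wordAppend w)) (fun u _ => hintX u t)
    simpa only [← hfun] using h4

end Main
section Tail
variable {Ω : Type*} [MeasureSpace Ω] [IsProbabilityMeasure (ℙ : Measure Ω)]
variable {b : ℕ}

lemma zeta_tail {ξ : Word b → Ω → ℝ} {Z : Ω → ℝ} (hb : 2 ≤ b)
    (hmeas : ∀ w, Measurable (ξ w))
    (hindep : iIndepFun ξ ℙ)
    (hlaw : ∀ w, Measure.map (ξ w) ℙ = gaussianReal 0 1)
    (u : Word b)
    (hconv : ∀ᵐ ω ∂ℙ, Tendsto (fun k => Real.sqrt ((b : ℝ) - 1) * ∑ j ∈ Finset.range k,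
      (b : ℝ) ^ (-((j : ℤ) + 1)) * ∑ v : Fin (j + 1) → Fin b, ξ (wordAppend u ⟨j, v⟩) ω)
      atTop (nhds (Z ω)))
    {a : ℝ} (ha : 0 ≤ a) :
    ℙ {ω | a + 1 ≤ |Z ω|} ≤ ENNReal.ofReal (2 * Real.exp (-(a^2)/2)) := by
  set Zp : ℕ → Ω → ℝ := fun k ω => Real.sqrt ((b : ℝ) - 1) * ∑ j ∈ Finset.range k,
      (b : ℝ) ^ (-((j : ℤ) + 1)) * ∑ v : Fin (j + 1) → Fin b, ξ (wordAppend u ⟨j, v⟩) ω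
      with hZp
  set A : ℕ → Set Ω := fun k => {ω | a ≤ |Zp k ω|} with hA
  set B : ℕ → Set Ω := fun K => ⋂ k, ⋂ (_ : K ≤ k), A k with hB
  have hBmono : Monotone B := by
    intro K K' hKK'
    refine Set.iInter_mono (fun k => ?_)
    exact Set.iInter_mono' (fun h => ⟨le_trans hKK' h, le_refl _⟩)
  have hsub : {ω | a + 1 ≤ |Z ω|} ≤ᵐ[ℙ] ⋃ K, B K := by
    filter_upwards [hconv] with ω hT hω
    have h1 : a < |Z ω| := lt_of_lt_of_le (by linarith) hω
    have h2 : ∀ᶠ k in atTop, a < |Zp k ω| :=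
      (hT.abs).eventually (eventually_gt_nhds h1)
    obtain ⟨K, hK⟩ := eventually_atTop.mp h2
    refine Set.mem_iUnion.2 ⟨K, ?_⟩
    refine Set.mem_iInter.2 (fun k => Set.mem_iInter.2 (fun hk => ?_))
    exact le_of_lt (hK k hk)
  have hBA : ∀ K, B K ⊆ A K := fun K ω hω => by
    exact Set.mem_iInter.mp (Set.mem_iInter.mp hω K) (le_refl K)
  calc ℙ {ω | a + 1 ≤ |Z ω|} ≤ ℙ (⋃ K, B K) := measure_mono_ae hsub
    _ = ⨆ K, ℙ (B K) := hBmono.measure_iUnion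
    _ ≤ ENNReal.ofReal (2 * Real.exp (-(a^2)/2)) := by
        refine iSup_le (fun K => le_trans (measure_mono (hBA K)) ?_)
        exact chernoff_abs
          (fun t => (mgf_Zpart hb hmeas hindep hlaw u K t).1)
          (fun t => (mgf_Zpart hb hmeas hindep hlaw u K t).2) ha

lemma summable_aux (c : ℝ) (hc : 0 < c) :
    Summable (fun n : ℕ => c^(n+1) * (2 * Real.exp (-(n:ℝ)^2/2))) := by
  apply summable_of_ratio_norm_eventually_le (r := 1/2) (by norm_num)
  have h1 : Tendsto (fun n : ℕ => -(2*(n:ℝ)+1)/2) atTop atBot := by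
    apply Tendsto.atBot_div_const (by norm_num)
    apply tendsto_neg_atBot_iff.mpr
    apply tendsto_atTop_add_const_right
    exact (tendsto_natCast_atTop_atTop (R := ℝ)).const_mul_atTop (by norm_num)
  have hten : Tendsto (fun n : ℕ => c * Real.exp (-(2*(n:ℝ)+1)/2)) atTop (nhds 0) := by
    have h2 := Real.tendsto_exp_atBot.comp h1
    simpa using h2.const_mul c
  filter_upwards [hten.eventually (eventually_le_nhds (by norm_num : (0:ℝ) < 1/2))] with n hn
  have pos1 : (0:ℝ) < c^(n+1) * (2 * Real.exp (-(n:ℝ)^2/2)) := by positivity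
  have pos2 : (0:ℝ) < c^(n+1+1) * (2 * Real.exp (-((n+1:ℕ):ℝ)^2/2)) := by positivity
  have hid : c^(n+1+1) * (2 * Real.exp (-((n+1:ℕ):ℝ)^2/2))
      = (c * Real.exp (-(2*(n:ℝ)+1)/2)) * (c^(n+1) * (2 * Real.exp (-(n:ℝ)^2/2))) := by
    push_cast
    rw [show (-(((n:ℝ)+1)^2)/2) = (-(2*(n:ℝ)+1)/2 + -((n:ℝ)^2)/2) by ring, Real.exp_add]
    ring
  rw [Real.norm_eq_abs, Real.norm_eq_abs, abs_of_pos pos2, abs_of_pos pos1, hid]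
  exact mul_le_mul_of_nonneg_right hn pos1.le

end Tail
section Final
variable {Ω : Type*} [MeasureSpace Ω] [IsProbabilityMeasure (ℙ : Measure Ω)]

lemma union_bound {ι : Type*} [Fintype ι] (s : ι → Set Ω) (c : ℝ)
    (h : ∀ i, ℙ (s i) ≤ ENNReal.ofReal c) :
    ℙ (⋃ i, s i) ≤ ENNReal.ofReal ((Fintype.card ι : ℝ) * c) := by
  calc ℙ (⋃ i, s i) ≤ ∑' i, ℙ (s i) := measure_iUnion_le s
    _ ≤ ∑' _ : ι, ENNReal.ofReal c := ENNReal.tsum_le_tsum (fun i => h i)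
    _ = (Fintype.card ι : ℝ≥0∞) * ENNReal.ofReal c := by
        rw [tsum_fintype, Finset.sum_const, Finset.card_univ, nsmul_eq_mul]
    _ = ENNReal.ofReal ((Fintype.card ι : ℝ) * c) := by
        rw [← ENNReal.ofReal_natCast, ← ENNReal.ofReal_mul (Nat.cast_nonneg _)]

theorem stmt_17' (b : ℕ) (hb : 2 ≤ b)
    (ξ : Word b → Ω → ℝ)
    (hmeas : ∀ w, Measurable (ξ w))
    (hindep : ProbabilityTheory.iIndepFun ξ ℙ)
    (hlaw : ∀ w, Measure.map (ξ w) ℙ = ProbabilityTheory.gaussianReal 0 1)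
    (ζ : Word b → Ω → ℝ)
    (hζ : ∀ w, ∀ᵐ ω ∂ℙ, Tendsto
      (fun n => Real.sqrt ((b : ℝ) - 1) * ∑ j ∈ Finset.range n,
        (b : ℝ) ^ (-((j : ℤ) + 1)) *
          ∑ v : Fin (j + 1) → Fin b, ξ (wordAppend w ⟨j, v⟩) ω)
      atTop (nhds (ζ w ω))) :
    ∀ᵐ ω ∂ℙ, ∀ ε : ℝ, 0 < ε →
      (fun n : ℕ => ⨆ f : Fin (n + 1) → Fin b, |cascadeM ξ ζ ⟨n, f⟩ ω|)
        =o[atTop] (fun n : ℕ => (b : ℝ) ^ (-(((n : ℝ) + 1) * (1 - ε)))) := by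
  have hb1 : (1:ℝ) < (b:ℝ) := by exact_mod_cast hb.trans_lt' one_lt_two
  have hb0 : (0:ℝ) < (b:ℝ) := lt_trans one_pos hb1
  haveI : Nonempty (Fin b) := ⟨⟨0, by omega⟩⟩
  -- tail bound for a single ξ word
  have hxi_tail : ∀ (u : Word b) (a : ℝ), 0 ≤ a →
      ℙ {ω | a ≤ |ξ u ω|} ≤ ENNReal.ofReal (2 * Real.exp (-(a^2)/2)) := fun u a ha =>
    chernoff_abs (fun t => le_of_eq (mgf_std (hmeas u) (hlaw u) t))
      (fun t => integrable_exp_mul_std (hmeas u) (hlaw u) t) ha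
  set E : ℕ → Set Ω := fun n =>
    ⋃ f : Fin (n+1) → Fin b, {ω | (n:ℝ)+1 ≤ |ξ ⟨n,f⟩ ω|} with hE
  set F : ℕ → Set Ω := fun n =>
    ⋃ f : Fin (n+1) → Fin b, {ω | (n:ℝ)+1 ≤ |ζ ⟨n,f⟩ ω|} with hF
  have card_eq : ∀ n : ℕ, ((Fintype.card (Fin (n+1) → Fin b)) : ℝ) = (b:ℝ)^(n+1) := by
    intro n
    rw [Fintype.card_fun, Fintype.card_fin, Fintype.card_fin]
    push_cast
    ring
  have exp_mono : ∀ n : ℕ, 2 * Real.exp (-(((n:ℝ)+1)^2)/2) ≤ 2 * Real.exp (-((n:ℝ)^2)/2) := by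
    intro n
    have hn0 : (0:ℝ) ≤ (n:ℝ) := Nat.cast_nonneg n
    have : -(((n:ℝ)+1)^2)/2 ≤ -((n:ℝ)^2)/2 := by nlinarith
    nlinarith [Real.exp_le_exp.2 this]
  have hEbound : ∀ n, ℙ (E n) ≤
      ENNReal.ofReal ((b:ℝ)^(n+1) * (2 * Real.exp (-((n:ℝ)^2)/2))) := by
    intro n
    rw [← card_eq n]
    apply union_bound
    intro f
    refine le_trans (hxi_tail ⟨n,f⟩ ((n:ℝ)+1) (by positivity)) ?_
    exact ENNReal.ofReal_le_ofReal (exp_mono n)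
  have hFbound : ∀ n, ℙ (F n) ≤
      ENNReal.ofReal ((b:ℝ)^(n+1) * (2 * Real.exp (-((n:ℝ)^2)/2))) := by
    intro n
    rw [← card_eq n]
    apply union_bound
    intro f
    exact zeta_tail hb hmeas hindep hlaw ⟨n,f⟩ (hζ ⟨n,f⟩) (Nat.cast_nonneg n)
  have hsummable := summable_aux (b:ℝ) hb0
  have htsum : ∀ (G : ℕ → Set Ω), (∀ n, ℙ (G n) ≤
      ENNReal.ofReal ((b:ℝ)^(n+1) * (2 * Real.exp (-((n:ℝ)^2)/2)))) →
      (∑' n, ℙ (G n)) ≠ ⊤ := by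
    intro G hG
    refine ne_of_lt (lt_of_le_of_lt (ENNReal.tsum_le_tsum hG) ?_)
    rw [← ENNReal.ofReal_tsum_of_nonneg (fun n => by positivity) hsummable]
    exact ENNReal.ofReal_lt_top
  filter_upwards [ae_eventually_notMem (htsum E hEbound),
    ae_eventually_notMem (htsum F hFbound)] with ω hωE hωF
  intro ε hε
  obtain ⟨N, hN⟩ := eventually_atTop.mp (hωE.and hωF)
  set Cξ : ℝ := ∑ u ∈ wSk b N, |ξ u ω| with hCξ
  set Cζ : ℝ := ∑ u ∈ wSk b N, |ζ u ω| with hCζ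
  have hCξ0 : 0 ≤ Cξ := Finset.sum_nonneg (fun u _ => abs_nonneg _)
  have hCζ0 : 0 ≤ Cζ := Finset.sum_nonneg (fun u _ => abs_nonneg _)
  have hmemN : ∀ u : Word b, u.1 < N → u ∈ wSk b N := by
    rintro ⟨m, f⟩ hm
    exact Finset.mem_sigma.mpr ⟨Finset.mem_range.2 hm, Finset.mem_univ _⟩
  have hxiB : ∀ u : Word b, |ξ u ω| ≤ Cξ + u.1 + 1 := by
    intro u
    by_cases hu : u.1 < N
    · have h1 := Finset.single_le_sum (f := fun u => |ξ u ω|)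
        (fun i _ => abs_nonneg _) (hmemN u hu)
      have h2 : (0:ℝ) ≤ (u.1 : ℝ) := Nat.cast_nonneg _
      rw [← hCξ] at h1
      linarith
    · have h2 := (hN u.1 (le_of_not_gt hu)).1
      rw [hE] at h2
      simp only [Set.mem_iUnion, Set.mem_setOf_eq, not_exists, not_le] at h2
      have h3 := h2 u.2
      change |ξ u ω| < _ at h3
      linarith
  have hzetaB : ∀ u : Word b, |ζ u ω| ≤ Cζ + u.1 + 1 := by
    intro u
    by_cases hu : u.1 < N
    · have h1 := Finset.single_le_sum (f := fun u => |ζ u ω|)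
        (fun i _ => abs_nonneg _) (hmemN u hu)
      have h2 : (0:ℝ) ≤ (u.1 : ℝ) := Nat.cast_nonneg _
      rw [← hCζ] at h1
      linarith
    · have h2 := (hN u.1 (le_of_not_gt hu)).2
      rw [hF] at h2
      simp only [Set.mem_iUnion, Set.mem_setOf_eq, not_exists, not_le] at h2
      have h3 := h2 u.2
      change |ζ u ω| < _ at h3
      linarith
  have hSB : ∀ (n : ℕ) (f : Fin (n+1) → Fin b),
      |brwS ξ ⟨n,f⟩ ω| ≤ ((n:ℝ)+1) * (Cξ + (n:ℝ) + 1) := by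
    intro n f
    refine le_trans (Finset.abs_sum_le_sum_abs _ _) ?_
    have hterm : ∀ k : Fin (n+1), |ξ (wordPrefix ⟨n,f⟩ k) ω| ≤ Cξ + (n:ℝ) + 1 := by
      intro k
      have h1 := hxiB (wordPrefix ⟨n,f⟩ k)
      have h2 : ((wordPrefix (⟨n,f⟩ : Word b) k).1 : ℝ) ≤ (n:ℝ) := by
        have : (wordPrefix (⟨n,f⟩ : Word b) k).1 = (k : ℕ) := rfl
        rw [this]
        exact_mod_cast Nat.lt_succ_iff.mp k.isLt
      linarith
    calc ∑ k : Fin (n+1), |ξ (wordPrefix ⟨n,f⟩ k) ω|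
        ≤ ∑ _k : Fin (n+1), (Cξ + (n:ℝ) + 1) := Finset.sum_le_sum (fun k _ => hterm k)
      _ = ((n:ℝ)+1) * (Cξ + (n:ℝ) + 1) := by
          rw [Finset.sum_const, Finset.card_univ, Fintype.card_fin, nsmul_eq_mul]
          push_cast
          ring
  set D : ℝ := (Cζ + 1) + Real.sqrt ((b:ℝ)-1) * (Cξ + 1) with hD
  have hsq0 : (0:ℝ) ≤ Real.sqrt ((b:ℝ)-1) := Real.sqrt_nonneg _
  have hD0 : 0 ≤ D := by positivity
  have hcascade : ∀ (n : ℕ) (f : Fin (n+1) → Fin b),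
      |cascadeM ξ ζ ⟨n,f⟩ ω| ≤ (((b:ℝ)^(n+1))⁻¹) * (D * ((n:ℝ)+1)^2) := by
    intro n f
    have hlen : wordLen (⟨n,f⟩ : Word b) = n + 1 := rfl
    have hzpow : ((b:ℝ) ^ (-(wordLen (⟨n,f⟩ : Word b) : ℤ))) = ((b:ℝ)^(n+1))⁻¹ := by
      rw [hlen]
      push_cast
      rw [show (-((n:ℤ)+1)) = -(((n+1:ℕ)) : ℤ) by push_cast; ring, zpow_neg, zpow_natCast]
    have hpos : (0:ℝ) < ((b:ℝ)^(n+1))⁻¹ := by positivity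
    unfold cascadeM
    rw [abs_mul, hzpow, abs_of_pos hpos]
    apply mul_le_mul_of_nonneg_left _ hpos.le
    have h1 := hzetaB ⟨n,f⟩
    have h2 := hSB n f
    have hfst : ((⟨n,f⟩ : Word b).1 : ℝ) = (n:ℝ) := rfl
    rw [hfst] at h1
    calc |ζ ⟨n,f⟩ ω + Real.sqrt ((b:ℝ)-1) * brwS ξ ⟨n,f⟩ ω|
        ≤ |ζ ⟨n,f⟩ ω| + Real.sqrt ((b:ℝ)-1) * |brwS ξ ⟨n,f⟩ ω| := by
          refine le_trans (abs_add_le _ _) ?_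
          rw [abs_mul, abs_of_nonneg hsq0]
      _ ≤ (Cζ + (n:ℝ) + 1) + Real.sqrt ((b:ℝ)-1) * (((n:ℝ)+1) * (Cξ + (n:ℝ) + 1)) := by
          have := mul_le_mul_of_nonneg_left h2 hsq0
          linarith
      _ ≤ D * ((n:ℝ)+1)^2 := by
          rw [hD]
          have hn0 : (0:ℝ) ≤ (n:ℝ) := Nat.cast_nonneg _
          have e1 : Cζ + (n:ℝ) + 1 ≤ (Cζ+1)*((n:ℝ)+1)^2 := by nlinarith [mul_nonneg hCζ0 hn0, mul_nonneg (mul_nonneg hCζ0 hn0) hn0, sq_nonneg (n:ℝ)]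
          have e2 : ((n:ℝ)+1)*(Cξ+(n:ℝ)+1) ≤ (Cξ+1)*((n:ℝ)+1)^2 := by nlinarith [mul_nonneg hCξ0 hn0, mul_nonneg (mul_nonneg hCξ0 hn0) hn0, sq_nonneg (n:ℝ)]
          have e3 := mul_le_mul_of_nonneg_left e2 hsq0
          nlinarith [e1, e3]
  -- now the asymptotics
  rw [isLittleO_iff]
  intro c hc
  set r : ℝ := (b:ℝ) ^ (-ε) with hr
  have hr0 : 0 < r := Real.rpow_pos_of_pos hb0 _
  have hr1 : r < 1 := Real.rpow_lt_one_of_one_lt_of_neg hb1 (by linarith)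
  have hrinv : 1 < r⁻¹ := one_lt_inv_iff₀.mpr ⟨hr0, hr1⟩
  have hT : Tendsto (fun n : ℕ => D * ((n:ℝ)+1)^2 * r^(n+1)) atTop (nhds 0) := by
    have h2 : Tendsto (fun n : ℕ => ((n:ℝ))^2 * r^n) atTop (nhds 0) := by
      have h3 := (isLittleO_pow_const_const_pow_of_one_lt
        (R := ℝ) 2 hrinv).tendsto_div_nhds_zero
      have h4 : ∀ n : ℕ, ((n:ℝ))^2 / (r⁻¹)^n = ((n:ℝ))^2 * r^n := by
        intro n
        rw [inv_pow, div_inv_eq_mul]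
      simpa only [h4] using h3
    have h5 : Tendsto (fun n : ℕ => (((n+1:ℕ)):ℝ)^2 * r^(n+1)) atTop (nhds 0) :=
      h2.comp (tendsto_add_atTop_nat 1)
    have h6 := h5.const_mul D
    simp only [mul_zero] at h6
    have h7 : ∀ n : ℕ, D * ((((n+1:ℕ)):ℝ)^2 * r^(n+1)) = D * ((n:ℝ)+1)^2 * r^(n+1) := by
      intro n
      push_cast
      ring
    simpa only [h7] using h6
  filter_upwards [hT.eventually (eventually_le_nhds hc)] with n hn
  have hgpos : (0:ℝ) < (b:ℝ) ^ (-(((n:ℝ)+1)*(1-ε))) := Real.rpow_pos_of_pos hb0 _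
  have hG0 : (0:ℝ) ≤ ⨆ f : Fin (n+1) → Fin b, |cascadeM ξ ζ ⟨n,f⟩ ω| := by
    refine le_ciSup_of_le (Set.Finite.bddAbove (Set.finite_range _))
      (Classical.arbitrary _) (abs_nonneg _)
  rw [Real.norm_eq_abs, Real.norm_eq_abs, abs_of_nonneg hG0, abs_of_pos hgpos]
  have hkey : (((b:ℝ)^(n+1))⁻¹) = r^(n+1) * (b:ℝ) ^ (-(((n:ℝ)+1)*(1-ε))) := by
    rw [hr, ← Real.rpow_natCast ((b:ℝ) ^ (-ε)) (n+1), ← Real.rpow_mul hb0.le,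
      ← Real.rpow_add hb0]
    rw [← Real.rpow_natCast (b:ℝ) (n+1), ← Real.rpow_neg hb0.le]
    congr 1
    push_cast
    ring
  have hsup : (⨆ f : Fin (n+1) → Fin b, |cascadeM ξ ζ ⟨n,f⟩ ω|)
      ≤ (((b:ℝ)^(n+1))⁻¹) * (D * ((n:ℝ)+1)^2) :=
    ciSup_le (fun f => hcascade n f)
  calc (⨆ f : Fin (n+1) → Fin b, |cascadeM ξ ζ ⟨n,f⟩ ω|)
      ≤ (((b:ℝ)^(n+1))⁻¹) * (D * ((n:ℝ)+1)^2) := hsup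
    _ = (D * ((n:ℝ)+1)^2 * r^(n+1)) * ((b:ℝ) ^ (-(((n:ℝ)+1)*(1-ε)))) := by
        rw [hkey]; ring
    _ ≤ c * ((b:ℝ) ^ (-(((n:ℝ)+1)*(1-ε)))) :=
        mul_le_mul_of_nonneg_right hn hgpos.le

end Final

end Aux

set_option maxHeartbeats 1000000 in
/-- With probability `1`, for every `ε > 0`,
`sup_{v ∈ A^n} |M([v])| = o(b^{-n(1-ε)})` as `n → ∞` (here the words of length `n`
are parametrized as `⟨n-1, f⟩`, i.e. `n` below denotes length `n+1`). -/
theorem stmt_17 {Ω : Type*} [MeasureSpace Ω] [IsProbabilityMeasure (ℙ : Measure Ω)]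
    (b : ℕ) (hb : 2 ≤ b)
    (ξ : Word b → Ω → ℝ)
    (hmeas : ∀ w, Measurable (ξ w))
    (hindep : ProbabilityTheory.iIndepFun ξ ℙ)
    (hlaw : ∀ w, Measure.map (ξ w) ℙ = ProbabilityTheory.gaussianReal 0 1)
    (ζ : Word b → Ω → ℝ)
    (hζ : ∀ w, ∀ᵐ ω ∂ℙ, Tendsto
      (fun n => Real.sqrt ((b : ℝ) - 1) * ∑ j ∈ Finset.range n,
        (b : ℝ) ^ (-((j : ℤ) + 1)) *
          ∑ v : Fin (j + 1) → Fin b, ξ (wordAppend w ⟨j, v⟩) ω)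
      atTop (nhds (ζ w ω))) :
    ∀ᵐ ω ∂ℙ, ∀ ε : ℝ, 0 < ε →
      (fun n : ℕ => ⨆ f : Fin (n + 1) → Fin b, |cascadeM ξ ζ ⟨n, f⟩ ω|)
        =o[atTop] (fun n : ℕ => (b : ℝ) ^ (-(((n : ℝ) + 1) * (1 - ε)))) := by
  exact stmt_17' b hb ξ hmeas hindep hlaw ζ hζ
end
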